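/- Let F : [0,∞) → ℝ ∪ {∞} be convex, decreasing, piecewise linear with infinitely many nodes n_1 < n_2 < ⋯ (n_i → ∞) and slopes −s_i on (n_i, n_{i+1}) with s_i ↓ 0 and lim s_i n_{i+1} = 0. Then the Legendre transform L(F)(t) = inf_x (F(x)+tx) satisfies: L(F) is affine with slope n_{i+1} on (s_{i+1}, s_i), affine with slope n_1 on (s_1, ∞), and L(F)(0⁺) = inf_x F(x). -/

import Mathlib

open Filter Set

private lemma aux_hmin (n s : ℕ → ℝ) (Fn : ℕ → ℝ) (t : ℝ)
    (hnmono : StrictMono n)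
    (hFnrec : ∀ i, Fn (i + 1) = Fn i - s i * (n (i + 1) - n i))
    (k : ℕ) (hup : ∀ j, k ≤ j → s j ≤ t) (hdown : ∀ j, j < k → t ≤ s j) :
    ∀ j, Fn k + t * n k ≤ Fn j + t * n j := by
  set h : ℕ → ℝ := fun j => Fn j + t * n j with hh
  have hstep : ∀ j, h (j + 1) = h j + (t - s j) * (n (j + 1) - n j) := by
    intro j; simp only [hh, hFnrec j]; ring
  have hge : ∀ j, k ≤ j → h k ≤ h j := by
    intro j hj
    induction j, hj using Nat.le_induction with
    | base => exact le_refl _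
    | succ m hm ih =>
      have hprod : 0 ≤ (t - s m) * (n (m + 1) - n m) :=
        mul_nonneg (by linarith [hup m hm]) (by linarith [hnmono (Nat.lt_succ_self m)])
      rw [hstep m]; linarith
  have hle : ∀ d, d ≤ k → h k ≤ h (k - d) := by
    intro d
    induction d with
    | zero => intro _; simp
    | succ m ih =>
      intro hmk
      have hm : m ≤ k := le_of_lt (Nat.lt_of_succ_le hmk)
      have e : k - m = (k - (m + 1)) + 1 := by omega
      have hlt : k - (m + 1) < k := by omega
      have hprod : 0 ≤ (s (k - (m + 1)) - t) * (n (k - (m + 1) + 1) - n (k - (m + 1))) :=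
        mul_nonneg (by linarith [hdown _ hlt])
          (by linarith [hnmono (Nat.lt_succ_self (k - (m + 1)))])
      have him := ih hm
      rw [e, hstep] at him
      linarith
  intro j
  rcases le_or_gt k j with hkj | hjk
  · exact hge j hkj
  · have e : k - (k - j) = j := by omega
    have := hle (k - j) (by omega)
    rwa [e] at this

private lemma aux_key (n s : ℕ → ℝ) (F : ℝ → EReal) (Fn : ℕ → ℝ) (t : ℝ)
    (hn0 : 0 ≤ n 0) (hnmono : StrictMono n) (hntop : Tendsto n atTop atTop)
    (hFnrec : ∀ i, Fn (i + 1) = Fn i - s i * (n (i + 1) - n i))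
    (hFtop : ∀ x : ℝ, x < n 0 → F x = ⊤)
    (hFseg : ∀ i, ∀ x : ℝ, n i ≤ x → x ≤ n (i + 1) →
      F x = ((Fn i - s i * (x - n i) : ℝ) : EReal))
    (k : ℕ) (hup : ∀ j, k ≤ j → s j ≤ t) (hdown : ∀ j, j < k → t ≤ s j) :
    (⨅ x : Set.Ici (0:ℝ), (F x.1 + ((t * x.1 : ℝ) : EReal)))
      = ((Fn k + t * n k : ℝ) : EReal) := by
  have hnk0 : (0:ℝ) ≤ n k := le_trans hn0 (hnmono.monotone (Nat.zero_le k))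
  apply le_antisymm
  · have hFk : F (n k) = ((Fn k : ℝ) : EReal) := by
      rw [hFseg k (n k) le_rfl (le_of_lt (hnmono (Nat.lt_succ_self k)))]
      norm_num
    calc (⨅ x : Set.Ici (0:ℝ), (F x.1 + ((t * x.1 : ℝ) : EReal)))
        ≤ F (n k) + ((t * n k : ℝ) : EReal) :=
          iInf_le (fun x : Set.Ici (0:ℝ) => F x.1 + ((t * x.1 : ℝ) : EReal)) ⟨n k, hnk0⟩
      _ = ((Fn k + t * n k : ℝ) : EReal) := by rw [hFk, ← EReal.coe_add]
  · rw [le_iInf_iff]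
    rintro ⟨x, hx⟩
    rcases lt_or_ge x (n 0) with hlt | hge
    · simp only [hFtop x hlt, EReal.top_add_coe, le_top]
    · obtain ⟨j, hj1, hj2⟩ : ∃ j, n j ≤ x ∧ x ≤ n (j + 1) := by
        have hne : {j : ℕ | x < n (j + 1)}.Nonempty := by
          obtain ⟨j, hj⟩ := (hntop.eventually (eventually_gt_atTop x)).exists
          exact ⟨j, lt_trans hj (hnmono (Nat.lt_succ_self j))⟩
        set j := sInf {j : ℕ | x < n (j + 1)} with hj
        have hmem : x < n (j + 1) := Nat.sInf_mem hne
        refine ⟨j, ?_, le_of_lt hmem⟩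
        rcases Nat.eq_zero_or_pos j with h0 | hpos
        · rw [h0]; exact hge
        · have hnm := Nat.notMem_of_lt_sInf (show j - 1 < sInf {j : ℕ | x < n (j + 1)} by omega)
          simp only [mem_setOf_eq, not_lt] at hnm
          have ej : j - 1 + 1 = j := by omega
          rwa [ej] at hnm
      rw [hFseg j x hj1 hj2, ← EReal.coe_add, EReal.coe_le_coe_iff]
      have hmin := aux_hmin n s Fn t hnmono hFnrec k hup hdown
      rcases le_or_gt k j with hkj | hjk
      · have h1 : s j ≤ t := hup j hkj
        have h2 := hmin j
        nlinarith [mul_nonneg (sub_nonneg.2 h1) (sub_nonneg.2 hj1)]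
      · have h1 : t ≤ s j := hdown j hjk
        have h2 := hmin (j + 1)
        rw [hFnrec j] at h2
        nlinarith [mul_nonneg (sub_nonneg.2 h1) (sub_nonneg.2 hj2)]

private lemma aux_infF (n s : ℕ → ℝ) (F : ℝ → EReal) (Fn : ℕ → ℝ)
    (hn0 : 0 ≤ n 0) (hnmono : StrictMono n) (hntop : Tendsto n atTop atTop)
    (hspos : ∀ i, 0 < s i)
    (hFnrec : ∀ i, Fn (i + 1) = Fn i - s i * (n (i + 1) - n i))
    (hFtop : ∀ x : ℝ, x < n 0 → F x = ⊤)
    (hFseg : ∀ i, ∀ x : ℝ, n i ≤ x → x ≤ n (i + 1) →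
      F x = ((Fn i - s i * (x - n i) : ℝ) : EReal)) :
    (⨅ x : Set.Ici (0:ℝ), F x.1) = ⨅ j : ℕ, ((Fn j : ℝ) : EReal) := by
  apply le_antisymm
  · rw [le_iInf_iff]
    intro j
    have hnj0 : (0:ℝ) ≤ n j := le_trans hn0 (hnmono.monotone (Nat.zero_le j))
    have hFj : F (n j) = ((Fn j : ℝ) : EReal) := by
      rw [hFseg j (n j) le_rfl (le_of_lt (hnmono (Nat.lt_succ_self j)))]
      norm_num
    calc (⨅ x : Set.Ici (0:ℝ), F x.1) ≤ F (n j) :=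
          iInf_le (fun x : Set.Ici (0:ℝ) => F x.1) ⟨n j, hnj0⟩
      _ = _ := hFj
  · rw [le_iInf_iff]
    rintro ⟨x, hx⟩
    rcases lt_or_ge x (n 0) with hlt | hge
    · simp only [hFtop x hlt, le_top]
    · obtain ⟨j, hj1, hj2⟩ : ∃ j, n j ≤ x ∧ x ≤ n (j + 1) := by
        have hne : {j : ℕ | x < n (j + 1)}.Nonempty := by
          obtain ⟨j, hj⟩ := (hntop.eventually (eventually_gt_atTop x)).exists
          exact ⟨j, lt_trans hj (hnmono (Nat.lt_succ_self j))⟩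
        set j := sInf {j : ℕ | x < n (j + 1)} with hj
        have hmem : x < n (j + 1) := Nat.sInf_mem hne
        refine ⟨j, ?_, le_of_lt hmem⟩
        rcases Nat.eq_zero_or_pos j with h0 | hpos
        · rw [h0]; exact hge
        · have hnm := Nat.notMem_of_lt_sInf (show j - 1 < sInf {j : ℕ | x < n (j + 1)} by omega)
          simp only [mem_setOf_eq, not_lt] at hnm
          have ej : j - 1 + 1 = j := by omega
          rwa [ej] at hnm
      calc (⨅ j : ℕ, ((Fn j : ℝ) : EReal)) ≤ ((Fn (j + 1) : ℝ) : EReal) := iInf_le _ (j + 1)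
        _ ≤ F x := by
            rw [hFseg j x hj1 hj2, EReal.coe_le_coe_iff, hFnrec j]
            nlinarith [mul_nonneg (le_of_lt (hspos j)) (sub_nonneg.2 hj2)]

/-- Proposition 2 (Fargues–Fontaine): for a convex decreasing piecewise linear `F` with
nodes `n i` (indexed from 0, so `n 0` is the paper's `n₁`), slopes `-s i` on
`[n i, n (i+1)]`, `s i ↓ 0` and `s i · n (i+1) → 0`, the Legendre transform
`L(F)(t) = inf_{x ≥ 0} (F x + t x)` is affine with slope `n (i+1)` on `(s (i+1), s i)`,
affine with slope `n 0` on `(s 0, ∞)`, and tends to `inf F` as `t → 0⁺`. -/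
theorem stmt_19 (n s : ℕ → ℝ) (c : ℝ) (F : ℝ → EReal) (Fn : ℕ → ℝ)
    (hn0 : 0 ≤ n 0) (hnmono : StrictMono n) (hntop : Tendsto n atTop atTop)
    (hspos : ∀ i, 0 < s i) (hsanti : StrictAnti s)
    (hs0 : Tendsto s atTop (nhds 0))
    (hlim : Tendsto (fun i => s i * n (i + 1)) atTop (nhds 0))
    (hFn0 : Fn 0 = c)
    (hFnrec : ∀ i, Fn (i + 1) = Fn i - s i * (n (i + 1) - n i))
    (hFtop : ∀ x : ℝ, x < n 0 → F x = ⊤)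
    (hFseg : ∀ i, ∀ x : ℝ, n i ≤ x → x ≤ n (i + 1) →
      F x = ((Fn i - s i * (x - n i) : ℝ) : EReal)) :
    (∀ i : ℕ, ∃ b : ℝ, ∀ t ∈ Set.Ioo (s (i + 1)) (s i),
      (⨅ x : Set.Ici (0:ℝ), (F x.1 + ((t * x.1 : ℝ) : EReal))) =
        ((n (i + 1) * t + b : ℝ) : EReal)) ∧
    (∃ b : ℝ, ∀ t : ℝ, s 0 < t →
      (⨅ x : Set.Ici (0:ℝ), (F x.1 + ((t * x.1 : ℝ) : EReal))) =
        ((n 0 * t + b : ℝ) : EReal)) ∧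
    Tendsto (fun t : ℝ => ⨅ x : Set.Ici (0:ℝ), (F x.1 + ((t * x.1 : ℝ) : EReal)))
      (nhdsWithin 0 (Set.Ioi 0)) (nhds (⨅ x : Set.Ici (0:ℝ), F x.1)) := by
  refine ⟨?_, ?_, ?_⟩
  · -- Part 1 : slope n (i+1) on (s (i+1), s i)
    intro i
    refine ⟨Fn (i + 1), ?_⟩
    rintro t ⟨ht1, ht2⟩
    have hup : ∀ j, i + 1 ≤ j → s j ≤ t := fun j hj =>
      le_of_lt (lt_of_le_of_lt (hsanti.antitone hj) ht1)
    have hdown : ∀ j, j < i + 1 → t ≤ s j := fun j hj =>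
      le_of_lt (lt_of_lt_of_le ht2 (hsanti.antitone (Nat.lt_succ_iff.1 hj)))
    rw [aux_key n s F Fn t hn0 hnmono hntop hFnrec hFtop hFseg (i + 1) hup hdown]
    congr 1; ring
  · -- Part 2 : slope n 0 on (s 0, ∞)
    refine ⟨c, ?_⟩
    intro t ht
    have hup : ∀ j, 0 ≤ j → s j ≤ t := fun j _ =>
      le_of_lt (lt_of_le_of_lt (hsanti.antitone (Nat.zero_le j)) ht)
    have hdown : ∀ j, j < 0 → t ≤ s j := fun j hj => absurd hj (Nat.not_lt_zero j)
    rw [aux_key n s F Fn t hn0 hnmono hntop hFnrec hFtop hFseg 0 hup hdown, hFn0]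
    congr 1; ring
  · -- Part 3 : behaviour as t → 0⁺
    rw [aux_infF n s F Fn hn0 hnmono hntop hspos hFnrec hFtop hFseg]
    set L : EReal := ⨅ j : ℕ, ((Fn j : ℝ) : EReal) with hL
    have hFnanti : Antitone Fn := antitone_nat_of_succ_le fun i => by
      have := hnmono (Nat.lt_succ_self i)
      nlinarith [hspos i, hFnrec i]
    -- the key convergence along indices
    have W : Tendsto (fun i : ℕ => ((Fn (i + 1) + s i * n (i + 1) : ℝ) : EReal))
        atTop (nhds L) := by
      by_cases hbdd : BddBelow (range Fn)
      · have hl := tendsto_atTop_ciInf hFnanti hbdd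
        set l : ℝ := ⨅ j, Fn j with hldef
        have h2 : Tendsto (fun j : ℕ => ((Fn j : ℝ) : EReal)) atTop (nhds L) :=
          tendsto_atTop_iInf (fun a b hab => EReal.coe_le_coe_iff.2 (hFnanti hab))
        have hLl : L = ((l : ℝ) : EReal) :=
          tendsto_nhds_unique h2 (EReal.tendsto_coe.2 hl)
        rw [hLl]
        apply EReal.tendsto_coe.2
        have : Tendsto (fun i : ℕ => Fn (i + 1) + s i * n (i + 1)) atTop (nhds (l + 0)) :=
          Tendsto.add (hl.comp (tendsto_add_atTop_nat 1)) hlim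
        simpa using this
      · have hbot : L = ⊥ := by
          rw [EReal.eq_bot_iff_forall_lt]
          intro M
          obtain ⟨y, ⟨j, rfl⟩, hy⟩ := not_bddBelow_iff.1 hbdd M
          exact lt_of_le_of_lt (iInf_le _ j) (EReal.coe_lt_coe_iff.2 hy)
        rw [hbot, EReal.tendsto_nhds_bot_iff_real]
        intro M
        obtain ⟨y, ⟨j, rfl⟩, hy⟩ := not_bddBelow_iff.1 hbdd (M - 1)
        filter_upwards [eventually_ge_atTop j, hlim.eventually (gt_mem_nhds one_pos)]
          with i hi1 hi2
        refine EReal.coe_lt_coe_iff.2 ?_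
        have h1 : Fn (i + 1) ≤ Fn j := hFnanti (le_trans hi1 (Nat.le_succ i))
        linarith
    -- the index function
    have hidx_ex : ∀ t : ℝ, 0 < t → {i : ℕ | s i < t}.Nonempty := fun t ht =>
      (hs0.eventually (gt_mem_nhds ht)).exists
    set idx : ℝ → ℕ := fun t => sInf {i : ℕ | s i < t} with hidxdef
    have hidx_lt : ∀ t : ℝ, 0 < t → s (idx t) < t := fun t ht => Nat.sInf_mem (hidx_ex t ht)
    have hidx_down : ∀ t : ℝ, ∀ j, j < idx t → t ≤ s j := by
      intro t j hj
      have h := Nat.notMem_of_lt_sInf hj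
      simp only [mem_setOf_eq, not_lt] at h
      exact h
    have hidx_tendsto : Tendsto idx (nhdsWithin 0 (Ioi 0)) atTop := by
      rw [tendsto_atTop]
      intro N
      filter_upwards [Ioo_mem_nhdsGT_of_mem
        (show (0:ℝ) ∈ Ico (0:ℝ) (s N) from ⟨le_rfl, hspos N⟩)] with t ht
      have h1 : s (idx t) < s N := lt_trans (hidx_lt t ht.1) ht.2
      exact le_of_lt (hsanti.lt_iff_gt.1 h1)
    -- upper comparison function
    have hv : Tendsto (fun k : ℕ => ((Fn k + s (k - 1) * n k : ℝ) : EReal)) atTop (nhds L) := by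
      refine (W.comp (tendsto_sub_atTop_nat 1)).congr' ?_
      filter_upwards [eventually_ge_atTop 1] with k hk
      have e : k - 1 + 1 = k := by omega
      simp only [Function.comp_apply, e]
    have hu : Tendsto (fun t : ℝ => ((Fn (idx t) + s (idx t - 1) * n (idx t) : ℝ) : EReal))
        (nhdsWithin 0 (Ioi 0)) (nhds L) := hv.comp hidx_tendsto
    refine tendsto_of_tendsto_of_tendsto_of_le_of_le' (show Tendsto (fun _ : ℝ => L) (nhdsWithin 0 (Ioi 0)) (nhds L) from tendsto_const_nhds) hu ?_ ?_
    · -- lower bound L ≤ G t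
      filter_upwards [self_mem_nhdsWithin] with t ht
      rw [le_iInf_iff]
      rintro ⟨x, hx⟩
      have h1 : L ≤ F x := by
        rw [hL, ← aux_infF n s F Fn hn0 hnmono hntop hspos hFnrec hFtop hFseg]
        exact iInf_le (fun x : Set.Ici (0:ℝ) => F x.1) ⟨x, hx⟩
      have h2 : (0 : EReal) ≤ ((t * x : ℝ) : EReal) := by
        exact_mod_cast mul_nonneg (le_of_lt ht) hx
      calc L ≤ F x := h1
        _ = F x + 0 := (add_zero _).symm
        _ ≤ F x + ((t * x : ℝ) : EReal) := add_le_add_right h2 _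
    · -- upper bound G t ≤ u t
      filter_upwards [Ioo_mem_nhdsGT_of_mem
        (show (0:ℝ) ∈ Ico (0:ℝ) (s 0) from ⟨le_rfl, hspos 0⟩)] with t ht
      have hk1 : 0 < idx t := hsanti.lt_iff_gt.1 (lt_trans (hidx_lt t ht.1) ht.2)
      have hup : ∀ j, idx t ≤ j → s j ≤ t := fun j hj =>
        le_of_lt (lt_of_le_of_lt (hsanti.antitone hj) (hidx_lt t ht.1))
      rw [aux_key n s F Fn t hn0 hnmono hntop hFnrec hFtop hFseg (idx t) hup (hidx_down t)]
      refine EReal.coe_le_coe_iff.2 ?_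
      have ht' : t ≤ s (idx t - 1) := hidx_down t _ (by omega)
      have hn' : (0:ℝ) ≤ n (idx t) := le_trans hn0 (hnmono.monotone (Nat.zero_le _))
      nlinarith [mul_le_mul_of_nonneg_right ht' hn']
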